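/- Every EZ-Reedy category is elegant: if C is a Reedy category such that every map in C⁻ has a section, and two maps σ, σ': c → d in C⁻ with the same set of sections are equal, then every point of every presheaf on C is uniquely a degeneracy of a unique non-degenerate point. -/
import Mathlib


open CategoryTheory CategoryTheory.Limits Opposite

universe v u

/-- A Reedy category structure on a category `C`: wide subcategories `plus` (direct) and
`minus` (inverse) together with a degree function, satisfying unique factorization and
the degree conditions. -/
structure ReedyStruct (C : Type u) [Category.{v} C] where
  plus : MorphismProperty C
  minus : MorphismProperty C
  deg : C → ℕ
  plus_id : ∀ c : C, plus (𝟙 c)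
  minus_id : ∀ c : C, minus (𝟙 c)
  plus_comp : ∀ {a b c : C} (f : a ⟶ b) (g : b ⟶ c), plus f → plus g → plus (f ≫ g)
  minus_comp : ∀ {a b c : C} (f : a ⟶ b) (g : b ⟶ c), minus f → minus g → minus (f ≫ g)
  fact_exists : ∀ {a b : C} (f : a ⟶ b), ∃ (e : C) (g : a ⟶ e) (h : e ⟶ b),
    minus g ∧ plus h ∧ g ≫ h = f
  fact_unique : ∀ {a b e e' : C} (g : a ⟶ e) (h : e ⟶ b) (g' : a ⟶ e') (h' : e' ⟶ b),
    minus g → plus h → minus g' → plus h' → g ≫ h = g' ≫ h' →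
    ∃ w : e = e', g ≫ eqToHom w = g' ∧ eqToHom w ≫ h' = h
  plus_deg : ∀ {a b : C} (f : a ⟶ b), plus f → deg a ≤ deg b
  minus_deg : ∀ {a b : C} (f : a ⟶ b), minus f → deg b ≤ deg a
  plus_deg_eq : ∀ {a b : C} (f : a ⟶ b), plus f → deg a = deg b → ∃ w : a = b, f = eqToHom w
  minus_deg_eq : ∀ {a b : C} (f : a ⟶ b), minus f → deg a = deg b → ∃ w : a = b, f = eqToHom w

variable {C : Type} [SmallCategory C]

/-- A `c`-point `x ∈ X(c)` of a presheaf is degenerate if it is the image of some point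
under a non-identity map of `C⁻`. -/
def Degenerate (R : ReedyStruct C) (X : Cᵒᵖ ⥤ Type) {c : C} (x : X.obj (op c)) : Prop :=
  ∃ (d : C) (σ : c ⟶ d) (y : X.obj (op d)),
    R.minus σ ∧ (¬ ∃ w : c = d, σ = eqToHom w) ∧ X.map σ.op y = x

/-- A Reedy category is elegant if every point of every presheaf is uniquely a degeneracy
of a unique non-degenerate point. -/
def Elegant (R : ReedyStruct C) : Prop :=
  ∀ (X : Cᵒᵖ ⥤ Type) (c : C) (x : X.obj (op c)),
    ∃! p : Σ d : C, (c ⟶ d) × X.obj (op d),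
      R.minus p.2.1 ∧ ¬ Degenerate R X p.2.2 ∧ X.map p.2.1.op p.2.2 = x

lemma nondeg_plus (R : ReedyStruct C) (X : Cᵒᵖ ⥤ Type) {d d' : C}
    {y : X.obj (op d)} {y' : X.obj (op d')} (hy : ¬ Degenerate R X y)
    (f : d ⟶ d') (hf : X.map f.op y' = y) : R.plus f := by
  obtain ⟨e, g, h, hg, hh, hgh⟩ := R.fact_exists f
  by_cases hid : ∃ w : d = e, g = eqToHom w
  · obtain ⟨w, rfl⟩ := hid
    subst w
    rw [eqToHom_refl, Category.id_comp] at hgh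
    exact hgh ▸ hh
  · exfalso
    apply hy
    refine ⟨e, g, X.map h.op y', hg, hid, ?_⟩
    rw [← hgh] at hf
    rw [← hf]
    simp [FunctorToTypes.map_comp_apply]

lemma exists_nondeg (R : ReedyStruct C) (X : Cᵒᵖ ⥤ Type) :
    ∀ (n : ℕ) (c : C), R.deg c ≤ n → ∀ x : X.obj (op c),
    ∃ (d : C) (σ : c ⟶ d) (y : X.obj (op d)),
      R.minus σ ∧ ¬ Degenerate R X y ∧ X.map σ.op y = x := by
  intro n
  induction n with
  | zero =>
    intro c hc x
    by_cases hx : Degenerate R X x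
    · obtain ⟨d, σ, y, hσ, hnid, hxy⟩ := hx
      exfalso
      have h1 : R.deg d ≤ R.deg c := R.minus_deg σ hσ
      have h2 : R.deg d ≠ R.deg c := fun h => hnid (R.minus_deg_eq σ hσ h.symm)
      omega
    · exact ⟨c, 𝟙 c, x, R.minus_id c, hx, by simp⟩
  | succ n ih =>
    intro c hc x
    by_cases hx : Degenerate R X x
    · obtain ⟨d, σ, y, hσ, hnid, hxy⟩ := hx
      have h1 : R.deg d ≤ R.deg c := R.minus_deg σ hσ
      have h2 : R.deg d ≠ R.deg c := fun h => hnid (R.minus_deg_eq σ hσ h.symm)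
      obtain ⟨e, τ, z, hτ, hz, hzy⟩ := ih d (by omega) y
      refine ⟨e, σ ≫ τ, z, R.minus_comp σ τ hσ hτ, hz, ?_⟩
      rw [← hxy, ← hzy]
      simp [FunctorToTypes.map_comp_apply]
    · exact ⟨c, 𝟙 c, x, R.minus_id c, hx, by simp⟩

lemma uniq_nondeg (R : ReedyStruct C)
    (hEZ1 : ∀ {c d : C} (σ : c ⟶ d), R.minus σ → ∃ β : d ⟶ c, β ≫ σ = 𝟙 d)
    (hEZ2 : ∀ {c d : C} (σ σ' : c ⟶ d), R.minus σ → R.minus σ' →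
      ({β : d ⟶ c | β ≫ σ = 𝟙 d} = {β : d ⟶ c | β ≫ σ' = 𝟙 d}) → σ = σ')
    (X : Cᵒᵖ ⥤ Type) {c : C} (x : X.obj (op c))
    {d d' : C} (σ : c ⟶ d) (σ' : c ⟶ d') (y : X.obj (op d)) (y' : X.obj (op d'))
    (hσ : R.minus σ) (hσ' : R.minus σ')
    (hy : ¬ Degenerate R X y) (hy' : ¬ Degenerate R X y')
    (hx : X.map σ.op y = x) (hx' : X.map σ'.op y' = x) :
    (⟨d, σ, y⟩ : Σ e : C, (c ⟶ e) × X.obj (op e)) = ⟨d', σ', y'⟩ := by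
  have key : ∀ β : d ⟶ c, β ≫ σ = 𝟙 d → X.map (β ≫ σ').op y' = y := by
    intro β hβ
    have e1 : X.map (β ≫ σ').op y' = X.map β.op x := by
      rw [← hx']; simp [FunctorToTypes.map_comp_apply]
    have e2 : X.map β.op x = X.map (β ≫ σ).op y := by
      rw [← hx]; simp [FunctorToTypes.map_comp_apply]
    rw [e1, e2, hβ]; simp
  have key' : ∀ β : d' ⟶ c, β ≫ σ' = 𝟙 d' → X.map (β ≫ σ).op y = y' := by
    intro β hβ
    have e1 : X.map (β ≫ σ).op y = X.map β.op x := by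
      rw [← hx]; simp [FunctorToTypes.map_comp_apply]
    have e2 : X.map β.op x = X.map (β ≫ σ').op y' := by
      rw [← hx']; simp [FunctorToTypes.map_comp_apply]
    rw [e1, e2, hβ]; simp
  obtain ⟨β, hβ⟩ := hEZ1 σ hσ
  obtain ⟨β', hβ'⟩ := hEZ1 σ' hσ'
  have hp : R.plus (β ≫ σ') := nondeg_plus R X hy _ (key β hβ)
  have hp' : R.plus (β' ≫ σ) := nondeg_plus R X hy' _ (key' β' hβ')
  have hdeg : R.deg d = R.deg d' :=
    le_antisymm (R.plus_deg _ hp) (R.plus_deg _ hp')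
  obtain ⟨w, -⟩ := R.plus_deg_eq _ hp hdeg
  subst w
  have hsec : {γ : d ⟶ c | γ ≫ σ = 𝟙 d} = {γ : d ⟶ c | γ ≫ σ' = 𝟙 d} := by
    ext γ
    simp only [Set.mem_setOf_eq]
    constructor
    · intro hγ
      have hpγ : R.plus (γ ≫ σ') := nondeg_plus R X hy _ (key γ hγ)
      obtain ⟨w', hw'⟩ := R.plus_deg_eq _ hpγ rfl
      rw [hw']; simp
    · intro hγ
      have hpγ : R.plus (γ ≫ σ) := nondeg_plus R X hy' _ (key' γ hγ)
      obtain ⟨w', hw'⟩ := R.plus_deg_eq _ hpγ rfl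
      rw [hw']; simp
  have hσσ' : σ = σ' := hEZ2 σ σ' hσ hσ' hsec
  have hβσ' : β ≫ σ' = 𝟙 d := by rw [← hσσ']; exact hβ
  have hyy' : y = y' := by
    have := key β hβ
    rw [hβσ'] at this
    simpa using this.symm
  rw [hσσ', hyy']

/-- Every EZ-Reedy category is elegant: if every map of `C⁻` has a section, and two
parallel maps of `C⁻` with the same set of sections are equal, then every point of every
presheaf on `C` is uniquely a degeneracy of a unique non-degenerate point. -/
theorem ez_implies_elegant (R : ReedyStruct C)
    (hEZ1 : ∀ {c d : C} (σ : c ⟶ d), R.minus σ → ∃ β : d ⟶ c, β ≫ σ = 𝟙 d)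
    (hEZ2 : ∀ {c d : C} (σ σ' : c ⟶ d), R.minus σ → R.minus σ' →
      ({β : d ⟶ c | β ≫ σ = 𝟙 d} = {β : d ⟶ c | β ≫ σ' = 𝟙 d}) → σ = σ') :
    Elegant R := by
  intro X c x
  obtain ⟨d, σ, y, hσ, hy, hxy⟩ := exists_nondeg R X (R.deg c) c le_rfl x
  refine ⟨⟨d, σ, y⟩, ⟨hσ, hy, hxy⟩, ?_⟩
  rintro ⟨d', σ', y'⟩ ⟨h1, h2, h3⟩
  exact uniq_nondeg R @hEZ1 @hEZ2 X x σ' σ y' y h1 hσ h2 hy h3 hxy
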